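/- Let U be a nonempty convex subset of ℝᵈ, β ∈ (0,1), σ ∈ ℝⁿ, φ : ℝⁿ × U → ℝ and f : ℝⁿ × U → ℝⁿ. Let (x̂, û) ∈ c₀(ℕ, ℝⁿ) × ℓ∞(ℕ, U) and p ∈ ℓ¹(ℕ*, ℝⁿ*) satisfy: (i) x̂_{t+1} = f(x̂_t, û_t) for all t ∈ ℕ and x̂₀ = σ; (ii) φ and f are of class C¹ on ℝⁿ × U; (iii) φ maps bounded subsets of ℝⁿ × U into bounded subsets of ℝ; (iv) p_t = p_{t+1} ∘ D₁f(x̂_t, û_t) + βᵗ D₁φ(x̂_t, û_t) for all t ≥ 1; (v) ⟨p_{t+1} ∘ D₂f(x̂_t, û_t) + βᵗ D₂φ(x̂_t, û_t), u − û_t⟩ ≤ 0 for all u ∈ U and all t ∈ ℕ; (vi) for each t ∈ ℕ the function (x, u) ↦ ⟨p_{t+1}, f(x, u)⟩ + βᵗ φ(x, u) is concave on ℝⁿ × U. Then (x̂, û) is a solution of problem (P1): it maximizes Σ_{t=0}^{∞} βᵗ φ(x_t, u_t) over all x ∈ c₀(ℕ, ℝⁿ), u ∈ ℓ∞(ℕ,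 U) with x₀ = σ and x_{t+1} = f(x_t, u_t) for all t ∈ ℕ. -/

import Mathlib

open Filter Topology Bornology Set

lemma concave_fderiv_le {E : Type*} [NormedAddCommGroup E] [NormedSpace ℝ E]
    {s : Set E} {g : E → ℝ} {g' : E →L[ℝ] ℝ} {a y : E}
    (hg : ConcaveOn ℝ s g) (ha : a ∈ s) (hy : y ∈ s) (hd : HasFDerivAt g g' a) :
    g y ≤ g a + g' (y - a) := by
  have h1 : HasDerivAt (fun t : ℝ => a + t • (y - a)) (y - a) 0 := by
    simpa using ((hasDerivAt_id (0:ℝ)).smul_const (y - a)).const_add a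
  have hline : HasDerivAt (fun t : ℝ => g (a + t • (y - a))) (g' (y - a)) 0 := by
    have hd' : HasFDerivAt g g' (a + (0:ℝ) • (y - a)) := by simpa using hd
    have := hd'.comp_hasDerivAt (x := (0:ℝ)) h1
    exact this
  have hslope : Tendsto (slope (fun t : ℝ => g (a + t • (y - a))) 0) (𝓝[>] (0:ℝ))
      (𝓝 (g' (y - a))) :=
    (hasDerivAt_iff_tendsto_slope.1 hline).mono_left
      (nhdsWithin_mono _ (fun t ht => ne_of_gt ht))
  have key : g y - g a ≤ g' (y - a) := by
    refine ge_of_tendsto hslope ?_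
    filter_upwards [Ioo_mem_nhdsGT (show (0:ℝ) < 1 by norm_num)] with t ht
    have h0 : a + t • (y - a) = (1 - t) • a + t • y := by
      rw [smul_sub, sub_smul, one_smul]; abel
    have hc := hg.2 ha hy (show (0:ℝ) ≤ 1 - t by linarith [ht.2]) ht.1.le (by ring)
    simp only [smul_eq_mul] at hc
    rw [← h0] at hc
    rw [slope_def_field]
    rw [sub_zero, le_div_iff₀ ht.1]
    have h00 : g (a + (0:ℝ) • (y - a)) = g a := by simp
    rw [h00]
    nlinarith [hc]
  linarith

/-- Theorem 10.1, sufficient conditions for (P1).  Let `U ⊆ ℝᵈ` be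
nonempty convex, `β ∈ (0,1)`, `σ ∈ ℝⁿ`, and `(x̂, û) ∈ c₀(ℕ, ℝⁿ) × ℓ∞(ℕ, U)`,
`p ∈ ℓ¹(ℕ*, ℝⁿ*)` satisfy (i)–(vi).  Then `(x̂, û)` solves (P1).  `φ` and `f` are total
functions; "of class `C¹` on `ℝⁿ × U`" is rendered by `C¹` on `univ ×ˢ U₁` for an open
`U₁ ⊇ U`. -/
theorem stmt_17 {n d : ℕ}
    (U : Set (Fin d → ℝ)) (hUne : U.Nonempty) (hUconv : Convex ℝ U)
    (β : ℝ) (hβ : 0 < β ∧ β < 1) (σ : Fin n → ℝ)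
    (φ : (Fin n → ℝ) → (Fin d → ℝ) → ℝ)
    (f : (Fin n → ℝ) → (Fin d → ℝ) → (Fin n → ℝ))
    (xhat : ℕ → (Fin n → ℝ)) (uhat : ℕ → (Fin d → ℝ))
    (hxhat0 : Tendsto xhat atTop (𝓝 0))
    (huhatU : ∀ t, uhat t ∈ U) (huhatbd : IsBounded (Set.range uhat))
    (p : ℕ → ((Fin n → ℝ) →L[ℝ] ℝ)) (hp : Summable fun t => ‖p t‖)
    -- (i)
    (hinit : xhat 0 = σ) (hdyn : ∀ t : ℕ, xhat (t + 1) = f (xhat t) (uhat t))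
    -- (ii): φ, f of class C¹ on ℝⁿ × U
    (U1 : Set (Fin d → ℝ)) (hU1open : IsOpen U1) (hUU1 : U ⊆ U1)
    (hφ : ContDiffOn ℝ 1 (fun q : (Fin n → ℝ) × (Fin d → ℝ) => φ q.1 q.2) (Set.univ ×ˢ U1))
    (hf : ContDiffOn ℝ 1 (fun q : (Fin n → ℝ) × (Fin d → ℝ) => f q.1 q.2) (Set.univ ×ˢ U1))
    -- (iii): φ maps bounded subsets of ℝⁿ × U into bounded subsets of ℝ
    (hφbdd : ∀ s : Set ((Fin n → ℝ) × (Fin d → ℝ)), s ⊆ Set.univ ×ˢ U → IsBounded s →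
      IsBounded ((fun q : (Fin n → ℝ) × (Fin d → ℝ) => φ q.1 q.2) '' s))
    -- (iv): adjoint equation
    (hAE : ∀ t : ℕ, 1 ≤ t →
      p t = (p (t + 1)).comp (fderiv ℝ (fun x => f x (uhat t)) (xhat t))
        + β ^ t • fderiv ℝ (fun x => φ x (uhat t)) (xhat t))
    -- (v): weak maximum principle
    (hWM : ∀ t : ℕ, ∀ u ∈ U,
      (p (t + 1)) (fderiv ℝ (fun v => f (xhat t) v) (uhat t) (u - uhat t))
        + β ^ t * (fderiv ℝ (fun v => φ (xhat t) v) (uhat t) (u - uhat t)) ≤ 0)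
    -- (vi): concavity of the Hamiltonian
    (hconc : ∀ t : ℕ, ConcaveOn ℝ (Set.univ ×ˢ U)
      (fun q : (Fin n → ℝ) × (Fin d → ℝ) => (p (t + 1)) (f q.1 q.2) + β ^ t * φ q.1 q.2)) :
    -- conclusion: (x̂, û) solves (P1)
    ∀ (x : ℕ → (Fin n → ℝ)) (u : ℕ → (Fin d → ℝ)),
      Tendsto x atTop (𝓝 0) → (∀ t, u t ∈ U) → IsBounded (Set.range u) →
      x 0 = σ → (∀ t : ℕ, x (t + 1) = f (x t) (u t)) →
      (∑' t : ℕ, β ^ t * φ (x t) (u t)) ≤ ∑' t : ℕ, β ^ t * φ (xhat t) (uhat t) := by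
  intro x u hx0 huU hubd hxinit hxdyn
  obtain ⟨hβ0, hβ1⟩ := hβ
  set A : ℕ → ℝ := fun t => β ^ t * φ (x t) (u t) with hA
  set B : ℕ → ℝ := fun t => β ^ t * φ (xhat t) (uhat t) with hB
  set a : ℕ → ℝ := fun t => p t (x t - xhat t) with ha
  -- differentiability
  have hopen : IsOpen ((Set.univ : Set (Fin n → ℝ)) ×ˢ U1) := isOpen_univ.prod hU1open
  have hmemhat : ∀ t, ((xhat t, uhat t) : (Fin n → ℝ) × (Fin d → ℝ)) ∈ Set.univ ×ˢ U1 :=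
    fun t => ⟨mem_univ _, hUU1 (huhatU t)⟩
  have hfd : ∀ t, HasFDerivAt (fun q : (Fin n → ℝ) × (Fin d → ℝ) => f q.1 q.2)
      (fderiv ℝ (fun q : (Fin n → ℝ) × (Fin d → ℝ) => f q.1 q.2) (xhat t, uhat t))
      (xhat t, uhat t) := fun t =>
    (((hf.differentiableOn one_ne_zero) _ (hmemhat t)).differentiableAt
      (hopen.mem_nhds (hmemhat t))).hasFDerivAt
  have hφd : ∀ t, HasFDerivAt (fun q : (Fin n → ℝ) × (Fin d → ℝ) => φ q.1 q.2)
      (fderiv ℝ (fun q : (Fin n → ℝ) × (Fin d → ℝ) => φ q.1 q.2) (xhat t, uhat t))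
      (xhat t, uhat t) := fun t =>
    (((hφ.differentiableOn one_ne_zero) _ (hmemhat t)).differentiableAt
      (hopen.mem_nhds (hmemhat t))).hasFDerivAt
  -- partial derivatives
  have hfp1 : ∀ t, fderiv ℝ (fun x' => f x' (uhat t)) (xhat t)
      = (fderiv ℝ (fun q : (Fin n → ℝ) × (Fin d → ℝ) => f q.1 q.2) (xhat t, uhat t)).comp
        (ContinuousLinearMap.inl ℝ _ _) := fun t =>
    (HasFDerivAt.comp (f := fun e => (e, uhat t)) (xhat t) (hfd t) (hasFDerivAt_prodMk_left (xhat t) (uhat t))).fderiv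
  have hfp2 : ∀ t, fderiv ℝ (fun v => f (xhat t) v) (uhat t)
      = (fderiv ℝ (fun q : (Fin n → ℝ) × (Fin d → ℝ) => f q.1 q.2) (xhat t, uhat t)).comp
        (ContinuousLinearMap.inr ℝ _ _) := fun t =>
    (HasFDerivAt.comp (f := fun v => (xhat t, v)) (uhat t) (hfd t) (hasFDerivAt_prodMk_right (xhat t) (uhat t))).fderiv
  have hφp1 : ∀ t, fderiv ℝ (fun x' => φ x' (uhat t)) (xhat t)
      = (fderiv ℝ (fun q : (Fin n → ℝ) × (Fin d → ℝ) => φ q.1 q.2) (xhat t, uhat t)).comp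
        (ContinuousLinearMap.inl ℝ _ _) := fun t =>
    (HasFDerivAt.comp (f := fun e => (e, uhat t)) (xhat t) (hφd t) (hasFDerivAt_prodMk_left (xhat t) (uhat t))).fderiv
  have hφp2 : ∀ t, fderiv ℝ (fun v => φ (xhat t) v) (uhat t)
      = (fderiv ℝ (fun q : (Fin n → ℝ) × (Fin d → ℝ) => φ q.1 q.2) (xhat t, uhat t)).comp
        (ContinuousLinearMap.inr ℝ _ _) := fun t =>
    (HasFDerivAt.comp (f := fun v => (xhat t, v)) (uhat t) (hφd t) (hasFDerivAt_prodMk_right (xhat t) (uhat t))).fderiv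
  -- per-step inequality
  have hstep : ∀ t, A t - B t ≤ a t - a (t + 1) := by
    intro t
    set F' := fderiv ℝ (fun q : (Fin n → ℝ) × (Fin d → ℝ) => f q.1 q.2) (xhat t, uhat t) with hF'
    set Φ' := fderiv ℝ (fun q : (Fin n → ℝ) × (Fin d → ℝ) => φ q.1 q.2) (xhat t, uhat t) with hΦ'
    have hGd : HasFDerivAt
        (fun q : (Fin n → ℝ) × (Fin d → ℝ) => (p (t+1)) (f q.1 q.2) + β ^ t * φ q.1 q.2)
        ((p (t+1)).comp F' + β ^ t • Φ') (xhat t, uhat t) :=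
      (((p (t+1)).hasFDerivAt).comp (xhat t, uhat t) (hfd t)).add ((hφd t).const_mul (β ^ t))
    have hcg := concave_fderiv_le (hconc t) (a := ((xhat t, uhat t) : _ × _))
      (y := ((x t, u t) : _ × _)) ⟨mem_univ _, huhatU t⟩ ⟨mem_univ _, huU t⟩ hGd
    set xd : Fin n → ℝ := x t - xhat t with hxd
    set ud : Fin d → ℝ := u t - uhat t with hud
    have hΔ : ((x t, u t) : (Fin n → ℝ) × (Fin d → ℝ)) - (xhat t, uhat t) = (xd, ud) := rfl
    rw [hΔ] at hcg
    have hsplit : ((xd, ud) : (Fin n → ℝ) × (Fin d → ℝ)) = (xd, 0) + (0, ud) := by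
      simp [Prod.ext_iff]
    have hGval : ((p (t+1)).comp F' + β ^ t • Φ') (xd, ud)
        = ((p (t+1)) (F' (xd, 0)) + β ^ t * Φ' (xd, 0))
          + ((p (t+1)) (F' (0, ud)) + β ^ t * Φ' (0, ud)) := by
      rw [hsplit]
      simp only [ContinuousLinearMap.add_apply, ContinuousLinearMap.comp_apply,
        ContinuousLinearMap.smul_apply, smul_eq_mul, map_add]
      try ring
    -- the u-part is ≤ 0
    have hP2 : (p (t+1)) (F' (0, ud)) + β ^ t * Φ' (0, ud) ≤ 0 := by
      have := hWM t (u t) (huU t)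
      rw [hfp2 t, hφp2 t] at this
      simpa only [ContinuousLinearMap.comp_apply, ContinuousLinearMap.inr_apply] using this
    -- the x-part equals p t xd
    have hP1 : (p (t+1)) (F' (xd, 0)) + β ^ t * Φ' (xd, 0) = p t xd := by
      rcases Nat.eq_zero_or_pos t with ht | ht
      · subst ht
        have hxd0 : xd = 0 := by rw [hxd, hxinit, hinit, sub_self]
        rw [hxd0]
        have h00 : ((0, 0) : (Fin n → ℝ) × (Fin d → ℝ)) = 0 := rfl
        rw [h00]
        simp
      · have := congrArg (fun (L : (Fin n → ℝ) →L[ℝ] ℝ) => L xd) (hAE t ht)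
        simp only [ContinuousLinearMap.add_apply, ContinuousLinearMap.comp_apply,
          ContinuousLinearMap.smul_apply, smul_eq_mul, hfp1 t, hφp1 t,
          ContinuousLinearMap.inl_apply] at this
        rw [this]
    rw [hGval, hP1] at hcg
    have hgy : (p (t+1)) (f (x t) (u t)) = (p (t+1)) (x (t+1)) := by rw [← hxdyn t]
    have hga : (p (t+1)) (f (xhat t) (uhat t)) = (p (t+1)) (xhat (t+1)) := by rw [← hdyn t]
    simp only [hgy, hga] at hcg
    have hmapsub : p (t+1) (x (t+1) - xhat (t+1))
        = p (t+1) (x (t+1)) - p (t+1) (xhat (t+1)) := map_sub _ _ _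
    simp only [hA, hB, ha]
    simp only [ha] at *
    linarith [hcg, hP2, hmapsub]
  -- boundedness and summability
  have hxbd : IsBounded (range x) := Metric.isBounded_range_of_tendsto x hx0
  have hxhatbd : IsBounded (range xhat) := Metric.isBounded_range_of_tendsto xhat hxhat0
  have hrs : IsBounded ((range fun t => ((x t, u t) : (Fin n → ℝ) × (Fin d → ℝ)))
      ∪ range fun t => ((xhat t, uhat t) : (Fin n → ℝ) × (Fin d → ℝ))) := by
    refine IsBounded.union ?_ ?_
    · exact (hxbd.prod hubd).subset (range_subset_iff.2 fun t => ⟨⟨t, rfl⟩, ⟨t, rfl⟩⟩)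
    · exact (hxhatbd.prod huhatbd).subset (range_subset_iff.2 fun t => ⟨⟨t, rfl⟩, ⟨t, rfl⟩⟩)
  have hrsU : ((range fun t => ((x t, u t) : (Fin n → ℝ) × (Fin d → ℝ)))
      ∪ range fun t => ((xhat t, uhat t) : (Fin n → ℝ) × (Fin d → ℝ))) ⊆ Set.univ ×ˢ U := by
    rintro q (⟨t, rfl⟩ | ⟨t, rfl⟩)
    · exact ⟨mem_univ _, huU t⟩
    · exact ⟨mem_univ _, huhatU t⟩
  obtain ⟨M, hM⟩ := isBounded_iff_forall_norm_le.1 (hφbdd _ hrsU hrs)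
  have hMx : ∀ t, |φ (x t) (u t)| ≤ M := fun t => by
    have := hM _ ⟨(x t, u t), Or.inl ⟨t, rfl⟩, rfl⟩
    simpa [Real.norm_eq_abs] using this
  have hMxhat : ∀ t, |φ (xhat t) (uhat t)| ≤ M := fun t => by
    have := hM _ ⟨(xhat t, uhat t), Or.inr ⟨t, rfl⟩, rfl⟩
    simpa [Real.norm_eq_abs] using this
  have hgeo : Summable fun t : ℕ => M * β ^ t :=
    (summable_geometric_of_lt_one hβ0.le hβ1).mul_left M
  have hAS : Summable A := by
    refine Summable.of_norm_bounded hgeo fun t => ?_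
    rw [hA, norm_mul, Real.norm_eq_abs, Real.norm_eq_abs, abs_of_pos (pow_pos hβ0 t), mul_comm]
    exact mul_le_mul_of_nonneg_right (hMx t) (pow_pos hβ0 t).le
  have hBS : Summable B := by
    refine Summable.of_norm_bounded hgeo fun t => ?_
    rw [hB, norm_mul, Real.norm_eq_abs, Real.norm_eq_abs, abs_of_pos (pow_pos hβ0 t), mul_comm]
    exact mul_le_mul_of_nonneg_right (hMxhat t) (pow_pos hβ0 t).le
  -- a tends to 0
  obtain ⟨Cx, hCx⟩ := isBounded_iff_forall_norm_le.1 hxbd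
  obtain ⟨Cy, hCy⟩ := isBounded_iff_forall_norm_le.1 hxhatbd
  have hanorm : ∀ t, ‖a t‖ ≤ ‖p t‖ * (Cx + Cy) := by
    intro t
    refine le_trans ((p t).le_opNorm _) (mul_le_mul_of_nonneg_left ?_ (norm_nonneg _))
    exact le_trans (norm_sub_le _ _) (add_le_add (hCx _ ⟨t, rfl⟩) (hCy _ ⟨t, rfl⟩))
  have hptend : Tendsto (fun t => ‖p t‖) atTop (𝓝 0) := hp.tendsto_atTop_zero
  have hatend : Tendsto a atTop (𝓝 0) := by
    refine squeeze_zero_norm hanorm ?_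
    have := hptend.mul_const (Cx + Cy)
    simpa using this
  -- pass to the limit
  have htend : Tendsto (fun T => ∑ t ∈ Finset.range T, (A t - B t)) atTop
      (𝓝 ((∑' t, A t) - ∑' t, B t)) := by
    have := hAS.hasSum.tendsto_sum_nat.sub hBS.hasSum.tendsto_sum_nat
    refine this.congr fun T => ?_
    rw [Finset.sum_sub_distrib]
  have hnegtend : Tendsto (fun T => -a T) atTop (𝓝 0) := by
    simpa using hatend.neg
  have ha0 : a 0 = 0 := by
    simp only [ha]
    rw [hxinit, hinit, sub_self, map_zero]
  have hbound : ∀ T, ∑ t ∈ Finset.range T, (A t - B t) ≤ -a T := by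
    intro T
    calc ∑ t ∈ Finset.range T, (A t - B t)
        ≤ ∑ t ∈ Finset.range T, (a t - a (t+1)) := Finset.sum_le_sum fun t _ => hstep t
      _ = a 0 - a T := Finset.sum_range_sub' a T
      _ = -a T := by rw [ha0]; ring
  have hfin : (∑' t, A t) - (∑' t, B t) ≤ 0 := le_of_tendsto_of_tendsto' htend hnegtend hbound
  have : (∑' t, A t) ≤ ∑' t, B t := by linarith
  exact this
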